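/- arXiv:2509.24605 — 2 statements merged into one kernel-verified Lean document; each statement's English description precedes it below -/
import Mathlib

section
/- For the superpotential W(X₁,...,X_r) = Σᵢ e^{Xᵢ} + t·exp(−Σᵢ dᵢXᵢ) with t ∈ ℂ nonzero and positive integer weights d₁,...,d_r, the critical points of W modulo the identification Xᵢ ∼ Xᵢ + 2πi are exactly h^∨ = 1 + Σᵢ dᵢ in number. -/
open scoped BigOperators

lemma card_pow_eq_complex {n : ℕ} (hn : 0 < n) (C : ℂ) (hC : C ≠ 0) :
    Nat.card {z : ℂ // z ^ n = C} = n := by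
  obtain ⟨w, hw⟩ := IsAlgClosed.exists_pow_nat_eq C hn
  have hw0 : w ≠ 0 := by
    rintro rfl
    rw [zero_pow hn.ne'] at hw
    exact hC hw.symm
  have e : {z : ℂ // z ^ n = C} ≃ {u : ℂ // u ^ n = 1} :=
    { toFun := fun z => ⟨z.1 / w, by
        rw [div_pow, z.2, ← hw, div_self (pow_ne_zero _ hw0)]⟩
      invFun := fun u => ⟨w * u.1, by rw [mul_pow, u.2, mul_one, hw]⟩
      left_inv := fun z => by
        ext; field_simp
      right_inv := fun u => by
        ext; field_simp }
  rw [Nat.card_congr e]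
  have hset : {u : ℂ | u ^ n = 1} = (Polynomial.nthRootsFinset n (1 : ℂ) : Set ℂ) := by
    ext u; simp [Polynomial.mem_nthRootsFinset hn (1 : ℂ)]
  have h2 : Nat.card {u : ℂ // u ^ n = 1} = (Polynomial.nthRootsFinset n (1 : ℂ)).card := by
    rw [← Nat.card_eq_finsetCard]
    exact Nat.card_congr (Equiv.setCongr hset)
  rw [h2, (Complex.isPrimitiveRoot_exp n hn.ne').card_nthRootsFinset]

/-- The critical points of the Landau–Ginzburg superpotential
`W = Σᵢ e^{Xᵢ} + t exp(-Σᵢ dᵢ Xᵢ)` (with `t ≠ 0`, positive integer weights `dᵢ`), counted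
modulo `Xᵢ ∼ Xᵢ + 2πi` — equivalently, solutions `y ∈ (ℂ^×)^r` of
`yᵢ = dᵢ · t · (∏ⱼ yⱼ^{dⱼ})⁻¹` — are exactly `h^∨ = 1 + Σᵢ dᵢ` in number. -/
theorem lg_critical_point_count (r : ℕ) (d : Fin r → ℕ) (hd : ∀ i, 0 < d i)
    (t : ℂ) (ht : t ≠ 0) :
    Nat.card {y : Fin r → ℂˣ //
        ∀ i, (y i : ℂ) = (d i : ℂ) * t * (∏ j, (y j : ℂ) ^ (d j))⁻¹} =
      1 + ∑ i, d i := by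
  set D : ℕ := ∑ i, d i with hD
  set C : ℂ := (∏ j, (d j : ℂ) ^ (d j)) * t ^ D with hCdef
  have hC : C ≠ 0 := mul_ne_zero
    (Finset.prod_ne_zero_iff.2 fun j _ =>
      pow_ne_zero _ (Nat.cast_ne_zero.2 (hd j).ne'))
    (pow_ne_zero _ ht)
  have key : ∀ P : ℂ, (∏ j, ((d j : ℂ) * t * P⁻¹) ^ (d j)) = C * (P⁻¹) ^ D := by
    intro P
    simp_rw [mul_pow]
    rw [Finset.prod_mul_distrib, Finset.prod_mul_distrib,
      Finset.prod_pow_eq_pow_sum, Finset.prod_pow_eq_pow_sum]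
  have hPne : ∀ P : ℂ, P ^ (D + 1) = C → P ≠ 0 := by
    intro P h hP0
    rw [hP0, zero_pow (Nat.succ_ne_zero D)] at h
    exact hC h.symm
  -- forward computation: for a solution y, P := ∏ yⱼ^{dⱼ} satisfies P^{D+1} = C
  have fwd : ∀ y : {y : Fin r → ℂˣ //
        ∀ i, (y i : ℂ) = (d i : ℂ) * t * (∏ j, (y j : ℂ) ^ (d j))⁻¹},
      (∏ j, ((y.1 j : ℂ)) ^ (d j)) ^ (D + 1) = C := by
    intro y
    set P : ℂ := ∏ j, ((y.1 j : ℂ)) ^ (d j) with hPdef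
    have hP : P ≠ 0 := Finset.prod_ne_zero_iff.2 fun j _ =>
      pow_ne_zero _ (Units.ne_zero _)
    have h1 : P = C * (P⁻¹) ^ D := by
      calc P = ∏ j, ((d j : ℂ) * t * P⁻¹) ^ (d j) :=
            Finset.prod_congr rfl fun j _ => by rw [y.2 j]
        _ = C * (P⁻¹) ^ D := key P
    calc P ^ (D + 1) = P ^ D * P := by ring
      _ = P ^ D * (C * (P⁻¹) ^ D) := by rw [← h1]
      _ = C := by rw [mul_left_comm, ← mul_pow, mul_inv_cancel₀ hP, one_pow, mul_one]
  -- the backwards map on the underlying data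
  have hback : ∀ (P : ℂ), P ^ (D + 1) = C → ∀ i : Fin r,
      (d i : ℂ) * t * P⁻¹ ≠ 0 := fun P hP i =>
    mul_ne_zero (mul_ne_zero (Nat.cast_ne_zero.2 (hd i).ne') ht)
      (inv_ne_zero (hPne P hP))
  have hbackprod : ∀ (P : ℂ) (hP : P ^ (D + 1) = C),
      (∏ j, ((Units.mk0 _ (hback P hP j) : ℂˣ) : ℂ) ^ (d j)) = P := by
    intro P hP
    simp only [Units.val_mk0]
    rw [key P, ← hP]
    have h0 : P ≠ 0 := hPne P hP
    field_simp
    rw [pow_succ', mul_assoc, ← mul_pow, mul_one_div_cancel h0, one_pow, mul_one]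
  have e : {y : Fin r → ℂˣ //
        ∀ i, (y i : ℂ) = (d i : ℂ) * t * (∏ j, (y j : ℂ) ^ (d j))⁻¹}
      ≃ {P : ℂ // P ^ (D + 1) = C} :=
    { toFun := fun y => ⟨∏ j, ((y.1 j : ℂ)) ^ (d j), fwd y⟩
      invFun := fun P => ⟨fun i => Units.mk0 _ (hback P.1 P.2 i), by
        intro i
        rw [hbackprod P.1 P.2]
        simp⟩
      left_inv := by
        intro y
        apply Subtype.ext
        funext i
        apply Units.ext
        simp only [Units.val_mk0]
        exact (y.2 i).symm
      right_inv := by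
        intro P
        apply Subtype.ext
        exact hbackprod P.1 P.2 }
  rw [Nat.card_congr e, card_pow_eq_complex (Nat.succ_pos D) C hC, add_comm]
end

section
/- Let E be the elliptic curve over ℂ with j-invariant 0 (i.e. y² = x³ + w⁶ in ℙ(1,2,3)) carrying the ℤ/6 automorphism group. Let S = ℂ[w,x,y]/(y² − x³ − w⁶) graded with deg w = 1, deg x = 2, deg y = 3. For the subgroup H ⊂ ℤ/6 × ℤ/3 × ℤ/2 acting by (w,x,y) ↦ (ζ₆^{k₆} w, ζ₃^{k₃} x, (−1)^{k₂} y) with (d₆,d₃,d₂)=(6,3,2), the invariant ring S^H is the free polynomial ring ℂ[x³, y²] on two generators of degree 6 each. -/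
open MvPolynomial

/-- The relation ideal of the curve `y² = x³ + w⁶` in variables `w = X 0`, `x = X 1`,
`y = X 2`. -/
noncomputable def bolzaLikeIdeal : Ideal (MvPolynomial (Fin 3) ℂ) :=
  Ideal.span {X 2 ^ 2 - X 1 ^ 3 - X 0 ^ 6}

/-- The homogeneous coordinate ring `S = ℂ[w,x,y]/(y² - x³ - w⁶)` of the elliptic curve
with `j = 0`. -/
noncomputable abbrev SRing : Type :=
  MvPolynomial (Fin 3) ℂ ⧸ bolzaLikeIdeal

namespace BolzaAux

noncomputable def zeta6 : ℂ := Complex.exp (2 * Real.pi * Complex.I / 6)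
noncomputable def zeta3 : ℂ := Complex.exp (2 * Real.pi * Complex.I / 3)

lemma hz6 : IsPrimitiveRoot zeta6 6 := Complex.isPrimitiveRoot_exp 6 (by norm_num)
lemma hz3 : IsPrimitiveRoot zeta3 3 := Complex.isPrimitiveRoot_exp 3 (by norm_num)
lemma hz2 : IsPrimitiveRoot (-1 : ℂ) 2 := IsPrimitiveRoot.neg_one 0 (by norm_num)

/-- The scaling coefficients of the group element `(k₆, k₃, k₂)`. -/
noncomputable def cvec (k₆ : ZMod 6) (k₃ : ZMod 3) (k₂ : ZMod 2) : Fin 3 → ℂ :=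
  ![zeta6 ^ k₆.val, zeta3 ^ k₃.val, (-1 : ℂ) ^ k₂.val]

/-- The scaling substitution on the polynomial ring. -/
noncomputable def sigma (k₆ : ZMod 6) (k₃ : ZMod 3) (k₂ : ZMod 2) :
    MvPolynomial (Fin 3) ℂ →ₐ[ℂ] MvPolynomial (Fin 3) ℂ :=
  aeval (fun i => cvec k₆ k₃ k₂ i • X i)

lemma scale_monomial (c : Fin 3 → ℂ) (m : Fin 3 →₀ ℕ) (a : ℂ) :
    aeval (fun i => c i • X i) (monomial m a) =
      (∏ i : Fin 3, c i ^ m i) • (monomial m a : MvPolynomial (Fin 3) ℂ) := by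
  rw [monomial_eq]
  rw [map_mul, aeval_C]
  rw [Finsupp.prod_fintype _ _ (fun i => pow_zero _)]
  rw [map_prod]
  rw [smul_eq_C_mul, map_prod (C : ℂ →+* MvPolynomial (Fin 3) ℂ)]
  simp only [map_pow, aeval_X, smul_eq_C_mul, mul_pow, Finset.prod_mul_distrib, algebraMap_eq]
  ring

lemma charSum (n : ℕ) (z : ℂ) (hz : IsPrimitiveRoot z n) (m : ℕ) :
    ∑ j ∈ Finset.range n, z ^ (j * m) = if n ∣ m then (n : ℂ) else 0 := by
  have h : ∀ j, z ^ (j * m) = (z ^ m) ^ j := fun j => by rw [← pow_mul, mul_comm]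
  simp only [h]
  by_cases hd : n ∣ m
  · simp [(hz.pow_eq_one_iff_dvd m).2 hd, hd]
  · rw [geom_sum_eq, ← pow_mul, mul_comm m n, pow_mul, hz.pow_eq_one, one_pow, sub_self,
      zero_div]
    · simp [hd]
    · intro h1
      exact hd ((hz.pow_eq_one_iff_dvd m).1 h1)

/-- The invariant subalgebra upstairs. -/
noncomputable def A3 : Subalgebra ℂ (MvPolynomial (Fin 3) ℂ) :=
  Algebra.adjoin ℂ {X 0 ^ 6, X 1 ^ 3, X 2 ^ 2}

lemma monomial_mem_A3 {m : Fin 3 →₀ ℕ} (h0 : 6 ∣ m 0) (h1 : 3 ∣ m 1) (h2 : 2 ∣ m 2) (a : ℂ) :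
    (monomial m a : MvPolynomial (Fin 3) ℂ) ∈ A3 := by
  obtain ⟨a0, e0⟩ := h0
  obtain ⟨a1, e1⟩ := h1
  obtain ⟨a2, e2⟩ := h2
  rw [monomial_eq, Finsupp.prod_fintype _ _ (fun i => pow_zero _), Fin.prod_univ_three]
  refine Subalgebra.mul_mem _ (Subalgebra.algebraMap_mem _ a) ?_
  refine Subalgebra.mul_mem _ (Subalgebra.mul_mem _ ?_ ?_) ?_
  · rw [e0, pow_mul]
    exact pow_mem (Algebra.subset_adjoin (by simp)) a0
  · rw [e1, pow_mul]
    exact pow_mem (Algebra.subset_adjoin (by simp)) a1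
  · rw [e2, pow_mul]
    exact pow_mem (Algebra.subset_adjoin (by simp)) a2

lemma sum_sigma_monomial (m : Fin 3 →₀ ℕ) (a : ℂ) :
    ∑ k₆ : ZMod 6, ∑ k₃ : ZMod 3, ∑ k₂ : ZMod 2, sigma k₆ k₃ k₂ (monomial m a) =
      (if 6 ∣ m 0 then (6 : ℂ) else 0) • ((if 3 ∣ m 1 then (3 : ℂ) else 0) •
        ((if 2 ∣ m 2 then (2 : ℂ) else 0) • (monomial m a : MvPolynomial (Fin 3) ℂ))) := by
  simp only [sigma, scale_monomial, cvec, Fin.prod_univ_three, Matrix.cons_val_zero,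
    Matrix.cons_val_one, Matrix.head_cons, Matrix.cons_val_two, Matrix.tail_cons, ← pow_mul]
  simp_rw [mul_smul, ← Finset.smul_sum, ← Finset.sum_smul]
  have e6 : (∑ i : ZMod 6, zeta6 ^ (i.val * m 0)) =
      ∑ j ∈ Finset.range 6, zeta6 ^ (j * m 0) :=
    Fin.sum_univ_eq_sum_range (fun j => zeta6 ^ (j * m 0)) 6
  have e3 : (∑ i : ZMod 3, zeta3 ^ (i.val * m 1)) =
      ∑ j ∈ Finset.range 3, zeta3 ^ (j * m 1) :=
    Fin.sum_univ_eq_sum_range (fun j => zeta3 ^ (j * m 1)) 3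
  have e2 : (∑ i : ZMod 2, (-1 : ℂ) ^ (i.val * m 2)) =
      ∑ j ∈ Finset.range 2, (-1 : ℂ) ^ (j * m 2) :=
    Fin.sum_univ_eq_sum_range (fun j => (-1 : ℂ) ^ (j * m 2)) 2
  rw [e6, e3, e2, charSum 6 _ hz6, charSum 3 _ hz3, charSum 2 _ hz2]
  norm_num

lemma avg_mem (p : MvPolynomial (Fin 3) ℂ) :
    ((36 : ℂ))⁻¹ • (∑ k₆ : ZMod 6, ∑ k₃ : ZMod 3, ∑ k₂ : ZMod 2, sigma k₆ k₃ k₂ p) ∈ A3 := by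
  induction p using MvPolynomial.induction_on' with
  | monomial m a =>
    rw [sum_sigma_monomial]
    by_cases h0 : 6 ∣ m 0
    · by_cases h1 : 3 ∣ m 1
      · by_cases h2 : 2 ∣ m 2
        · rw [if_pos h0, if_pos h1, if_pos h2, smul_smul, smul_smul, smul_smul,
            show (36 : ℂ)⁻¹ * 6 * 3 * 2 = 1 by norm_num, one_smul]
          exact monomial_mem_A3 h0 h1 h2 a
        · rw [if_neg h2, zero_smul, smul_zero, smul_zero, smul_zero]
          exact Subalgebra.zero_mem _
      · rw [if_neg h1, zero_smul, smul_zero, smul_zero]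
        exact Subalgebra.zero_mem _
    · rw [if_neg h0, zero_smul, smul_zero]
      exact Subalgebra.zero_mem _
  | add p q hp hq =>
    simp only [map_add, Finset.sum_add_distrib, smul_add]
    exact Subalgebra.add_mem _ hp hq

lemma algind : AlgebraicIndependent ℂ
    ![Ideal.Quotient.mk bolzaLikeIdeal (X 1 ^ 3), Ideal.Quotient.mk bolzaLikeIdeal (X 2 ^ 2)] := by
  rw [algebraicIndependent_iff]
  intro P hP
  have hP' : (Ideal.Quotient.mkₐ ℂ bolzaLikeIdeal) (aeval ![X 1 ^ 3, X 2 ^ 2] P) = 0 := by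
    rw [comp_aeval_apply]
    rw [show (fun i => (Ideal.Quotient.mkₐ ℂ bolzaLikeIdeal) (![X 1 ^ 3, X 2 ^ 2] i)) =
      ![Ideal.Quotient.mk bolzaLikeIdeal (X 1 ^ 3), Ideal.Quotient.mk bolzaLikeIdeal (X 2 ^ 2)] by
        funext i; fin_cases i <;> simp]
    exact hP
  rw [Ideal.Quotient.mkₐ_eq_mk, Ideal.Quotient.eq_zero_iff_mem, bolzaLikeIdeal,
    Ideal.mem_span_singleton'] at hP'
  obtain ⟨g, hg⟩ := hP'
  apply MvPolynomial.funext
  intro v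
  obtain ⟨x0, hx0⟩ := IsAlgClosed.exists_pow_nat_eq (v 0) (by norm_num : 0 < 3)
  obtain ⟨y0, hy0⟩ := IsAlgClosed.exists_pow_nat_eq (v 1) (by norm_num : 0 < 2)
  obtain ⟨w0, hw0⟩ := IsAlgClosed.exists_pow_nat_eq (v 1 - v 0) (by norm_num : 0 < 6)
  have hz : (aeval ![w0, x0, y0] : MvPolynomial (Fin 3) ℂ →ₐ[ℂ] ℂ)
      ((aeval ![X 1 ^ 3, X 2 ^ 2]) P) = aeval v P := by
    rw [comp_aeval_apply (f := ![X 1 ^ 3, X 2 ^ 2])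
      (aeval ![w0, x0, y0] : MvPolynomial (Fin 3) ℂ →ₐ[ℂ] ℂ) P]
    have hfun : (fun i => (aeval ![w0, x0, y0] : MvPolynomial (Fin 3) ℂ →ₐ[ℂ] ℂ)
        (![X 1 ^ 3, X 2 ^ 2] i)) = v := by
      funext i
      fin_cases i <;> simp [hx0, hy0]
    rw [hfun]
  rw [← hg] at hz
  simp only [map_mul, map_sub, map_pow, aeval_X] at hz
  rw [map_zero]
  have heval : (aeval v) P = eval v P := by rw [aeval_def, Algebra.algebraMap_self]; rfl
  rw [← heval, ← hz]
  simp only [Matrix.cons_val_zero, Matrix.cons_val_one, Matrix.head_cons, Matrix.cons_val_two,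
    Matrix.tail_cons]
  rw [hx0, hy0, hw0]
  ring

lemma range_pair : Set.range ![Ideal.Quotient.mk bolzaLikeIdeal (X 1 ^ 3),
    Ideal.Quotient.mk bolzaLikeIdeal (X 2 ^ 2)] =
    ({Ideal.Quotient.mk bolzaLikeIdeal (X 1 ^ 3),
      Ideal.Quotient.mk bolzaLikeIdeal (X 2 ^ 2)} : Set SRing) := by
  ext t
  constructor
  · rintro ⟨i, rfl⟩
    fin_cases i <;> simp
  · rintro (rfl | rfl)
    · exact ⟨0, rfl⟩
    · exact ⟨1, rfl⟩

end BolzaAux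

/-- For the full group `H = ℤ/6 × ℤ/3 × ℤ/2` acting on `S = ℂ[w,x,y]/(y² - x³ - w⁶)` by
`(w,x,y) ↦ (ζ₆^{k₆} w, ζ₃^{k₃} x, (-1)^{k₂} y)` (the case `(d₆,d₃,d₂) = (6,3,2)`), the
invariant ring `S^H` is the free polynomial ring `ℂ[x³, y²]` on two generators of degree
`6` each (for the grading `deg w = 1`, `deg x = 2`, `deg y = 3`). -/
theorem invariant_ring_free_polynomial
    (act : ZMod 6 → ZMod 3 → ZMod 2 → (SRing →ₐ[ℂ] SRing))
    (hw : ∀ k₆ k₃ k₂, act k₆ k₃ k₂ (Ideal.Quotient.mk bolzaLikeIdeal (X 0)) =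
      Complex.exp (2 * Real.pi * Complex.I / 6) ^ (k₆.val) •
        Ideal.Quotient.mk bolzaLikeIdeal (X 0))
    (hx : ∀ k₆ k₃ k₂, act k₆ k₃ k₂ (Ideal.Quotient.mk bolzaLikeIdeal (X 1)) =
      Complex.exp (2 * Real.pi * Complex.I / 3) ^ (k₃.val) •
        Ideal.Quotient.mk bolzaLikeIdeal (X 1))
    (hy : ∀ k₆ k₃ k₂, act k₆ k₃ k₂ (Ideal.Quotient.mk bolzaLikeIdeal (X 2)) =
      ((-1 : ℂ)) ^ (k₂.val) • Ideal.Quotient.mk bolzaLikeIdeal (X 2)) :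
    -- the invariants are exactly the subalgebra generated by x³ and y²
    {s : SRing | ∀ k₆ k₃ k₂, act k₆ k₃ k₂ s = s} =
      ↑(Algebra.adjoin ℂ ({Ideal.Quotient.mk bolzaLikeIdeal (X 1 ^ 3),
          Ideal.Quotient.mk bolzaLikeIdeal (X 2 ^ 2)} : Set SRing)) ∧
    -- that subalgebra is a free polynomial ring on two generators
    Nonempty ((Algebra.adjoin ℂ ({Ideal.Quotient.mk bolzaLikeIdeal (X 1 ^ 3),
          Ideal.Quotient.mk bolzaLikeIdeal (X 2 ^ 2)} : Set SRing)) ≃ₐ[ℂ]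
        MvPolynomial (Fin 2) ℂ) ∧
    -- the two generators have degree 6 for the weights (1,2,3)
    weightedTotalDegree (fun i : Fin 3 => (i : ℕ) + 1) (X 1 ^ 3 : MvPolynomial (Fin 3) ℂ)
        = 6 ∧
    weightedTotalDegree (fun i : Fin 3 => (i : ℕ) + 1) (X 2 ^ 2 : MvPolynomial (Fin 3) ℂ)
        = 6 := by
  open BolzaAux in
  refine ⟨?_, ?_, ?_, ?_⟩
  · -- the set equality
    have hcomm : ∀ (k₆ : ZMod 6) (k₃ : ZMod 3) (k₂ : ZMod 2) (q : MvPolynomial (Fin 3) ℂ),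
        Ideal.Quotient.mkₐ ℂ bolzaLikeIdeal (sigma k₆ k₃ k₂ q) =
          act k₆ k₃ k₂ (Ideal.Quotient.mkₐ ℂ bolzaLikeIdeal q) := by
      intro k₆ k₃ k₂
      have h : (Ideal.Quotient.mkₐ ℂ bolzaLikeIdeal).comp (sigma k₆ k₃ k₂) =
          (act k₆ k₃ k₂).comp (Ideal.Quotient.mkₐ ℂ bolzaLikeIdeal) := by
        apply MvPolynomial.algHom_ext
        intro i
        fin_cases i
        · show Ideal.Quotient.mkₐ ℂ bolzaLikeIdeal
              (aeval (fun i => cvec k₆ k₃ k₂ i • X i) (X 0)) =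
            act k₆ k₃ k₂ (Ideal.Quotient.mkₐ ℂ bolzaLikeIdeal (X 0))
          rw [aeval_X, map_smul, Ideal.Quotient.mkₐ_eq_mk, hw]
          rfl
        · show Ideal.Quotient.mkₐ ℂ bolzaLikeIdeal
              (aeval (fun i => cvec k₆ k₃ k₂ i • X i) (X 1)) =
            act k₆ k₃ k₂ (Ideal.Quotient.mkₐ ℂ bolzaLikeIdeal (X 1))
          rw [aeval_X, map_smul, Ideal.Quotient.mkₐ_eq_mk, hx]
          rfl
        · show Ideal.Quotient.mkₐ ℂ bolzaLikeIdeal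
              (aeval (fun i => cvec k₆ k₃ k₂ i • X i) (X 2)) =
            act k₆ k₃ k₂ (Ideal.Quotient.mkₐ ℂ bolzaLikeIdeal (X 2))
          rw [aeval_X, map_smul, Ideal.Quotient.mkₐ_eq_mk, hy]
          rfl
      intro q
      exact AlgHom.congr_fun h q
    ext s
    simp only [Set.mem_setOf_eq, SetLike.mem_coe]
    constructor
    · intro hs
      obtain ⟨p, rfl⟩ := Ideal.Quotient.mk_surjective s
      have key := avg_mem p
      have hmk : Ideal.Quotient.mkₐ ℂ bolzaLikeIdeal
          (((36 : ℂ))⁻¹ • (∑ k₆ : ZMod 6, ∑ k₃ : ZMod 3, ∑ k₂ : ZMod 2, sigma k₆ k₃ k₂ p)) =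
          Ideal.Quotient.mk bolzaLikeIdeal p := by
        rw [map_smul]
        simp only [map_sum, hcomm, Ideal.Quotient.mkₐ_eq_mk]
        simp only [hs, Finset.sum_const, Finset.card_univ, ZMod.card]
        simp only [← Nat.cast_smul_eq_nsmul ℂ, smul_smul]
        norm_num
      have hmem : Ideal.Quotient.mk bolzaLikeIdeal p ∈
          A3.map (Ideal.Quotient.mkₐ ℂ bolzaLikeIdeal) := ⟨_, key, hmk⟩
      rw [A3, AlgHom.map_adjoin] at hmem
      refine Algebra.adjoin_le ?_ hmem
      rintro t ht
      simp only [Set.image_insert_eq, Set.image_singleton, Ideal.Quotient.mkₐ_eq_mk,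
        Set.mem_insert_iff, Set.mem_singleton_iff] at ht
      rcases ht with rfl | rfl | rfl
      · have h0 : Ideal.Quotient.mk bolzaLikeIdeal (X 2 ^ 2 - X 1 ^ 3 - X 0 ^ 6) = 0 :=
          Ideal.Quotient.eq_zero_iff_mem.2 (Ideal.subset_span (Set.mem_singleton _))
        rw [map_sub, map_sub, sub_eq_zero] at h0
        rw [← h0]
        exact Subalgebra.sub_mem _ (Algebra.subset_adjoin (Set.mem_insert_of_mem _ rfl))
          (Algebra.subset_adjoin (Set.mem_insert _ _))
      · exact Algebra.subset_adjoin (Set.mem_insert _ _)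
      · exact Algebra.subset_adjoin (Set.mem_insert_of_mem _ rfl)
    · intro hs k₆ k₃ k₂
      have hle : Algebra.adjoin ℂ ({Ideal.Quotient.mk bolzaLikeIdeal (X 1 ^ 3),
          Ideal.Quotient.mk bolzaLikeIdeal (X 2 ^ 2)} : Set SRing) ≤
          AlgHom.equalizer (act k₆ k₃ k₂) (AlgHom.id ℂ SRing) := by
        apply Algebra.adjoin_le
        have h3 : Complex.exp (2 * Real.pi * Complex.I / 3) ^ 3 = 1 := hz3.pow_eq_one
        have h2 : (-1 : ℂ) ^ 2 = 1 := hz2.pow_eq_one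
        rintro t (rfl | rfl)
        · show act k₆ k₃ k₂ (Ideal.Quotient.mk bolzaLikeIdeal (X 1 ^ 3)) =
            Ideal.Quotient.mk bolzaLikeIdeal (X 1 ^ 3)
          rw [map_pow, map_pow, hx, smul_pow, ← pow_mul, mul_comm k₃.val 3, pow_mul,
            h3, one_pow, one_smul]
        · show act k₆ k₃ k₂ (Ideal.Quotient.mk bolzaLikeIdeal (X 2 ^ 2)) =
            Ideal.Quotient.mk bolzaLikeIdeal (X 2 ^ 2)
          rw [map_pow, map_pow, hy, smul_pow, ← pow_mul, mul_comm k₂.val 2, pow_mul,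
            h2, one_pow, one_smul]
      exact hle hs
  · -- free polynomial ring
    have hr := range_pair
    have heq : Algebra.adjoin ℂ (Set.range ![Ideal.Quotient.mk bolzaLikeIdeal (X 1 ^ 3),
        Ideal.Quotient.mk bolzaLikeIdeal (X 2 ^ 2)]) =
        Algebra.adjoin ℂ ({Ideal.Quotient.mk bolzaLikeIdeal (X 1 ^ 3),
          Ideal.Quotient.mk bolzaLikeIdeal (X 2 ^ 2)} : Set SRing) := by rw [hr]
    exact ⟨(Subalgebra.equivOfEq _ _ heq).symm.trans algind.aevalEquiv.symm⟩
  · rw [X_pow_eq_monomial, weightedTotalDegree, support_monomial]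
    simp [Finsupp.weight, Finsupp.linearCombination, Finsupp.sum_single_index]
  · rw [X_pow_eq_monomial, weightedTotalDegree, support_monomial]
    simp [Finsupp.weight, Finsupp.linearCombination, Finsupp.sum_single_index]
end
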